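/- Let n ≥ 1, m ≥ 2n, B ∈ ℝ^{n×n} be invertible, D ∈ ℝ^{n×n} be diagonal with strictly positive diagonal entries, and M ∈ ℝ^{(m−2n)×n} be arbitrary. Then the stacked matrix W = [B; −DB; M] ∈ ℝ^{m×n} has a directed spanning set of ℝ^n with respect to every x ∈ ℝ^n; in particular the map x ↦ ReLU(Wx) is injective. -/

import Mathlib

/-- Componentwise ReLU applied to a vector (over an arbitrary finite index type). -/
noncomputable def relu {ι : Type*} (y : ι → ℝ) : ι → ℝ := fun j => max (y j) 0

lemma relu_aux {a b c : ℝ} (hc : 0 < c) (h1 : max a 0 = max b 0)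
    (h2 : max (-(c * a)) 0 = max (-(c * b)) 0) : a = b := by
  have key : ∀ t : ℝ, t = max t 0 - c⁻¹ * max (-(c * t)) 0 := by
    intro t
    rcases le_or_gt 0 t with h | h
    · rw [max_eq_left h, max_eq_right]
      · ring
      · nlinarith
    · rw [max_eq_right h.le, max_eq_left (by nlinarith)]
      field_simp
      ring
  rw [key a, key b, h1, h2]

/-- **Construction of injective ReLU layers with `m ≥ 2n`**: stacking `B`, `-DB` and an
arbitrary matrix `M` gives a matrix having a DSS of `ℝ^n` with respect to every `x`, whose
ReLU layer is injective. -/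
theorem stacked_matrix_has_dss_and_injective {n m : ℕ} (hn : 1 ≤ n) (hm : 2 * n ≤ m)
    (B : Matrix (Fin n) (Fin n) ℝ) (hB : IsUnit B)
    (d : Fin n → ℝ) (hd : ∀ i, 0 < d i)
    (M : Matrix (Fin (m - 2 * n)) (Fin n) ℝ) :
    let W : Matrix (Fin n ⊕ (Fin n ⊕ Fin (m - 2 * n))) (Fin n) ℝ :=
      Matrix.fromRows B (Matrix.fromRows (-(Matrix.diagonal d * B)) M)
    (∀ x : Fin n → ℝ,
      Submodule.span ℝ
        {w : Fin n → ℝ | ∃ j, 0 ≤ dotProduct (W j) x ∧ W j = w} = ⊤) ∧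
    Function.Injective (fun x : Fin n → ℝ => relu (W.mulVec x)) := by
  intro W
  have hWinl : ∀ i, W (Sum.inl i) = B i := fun i => rfl
  have hWinr : ∀ i, W (Sum.inr (Sum.inl i)) = -(d i • B i) := by
    intro i
    funext j
    change (-(Matrix.diagonal d * B)) i j = _
    simp [Matrix.diagonal_mul]
  have hdet : IsUnit B.det := (Matrix.isUnit_iff_isUnit_det B).mp hB
  have hspanB : Submodule.span ℝ (Set.range B) = ⊤ := by
    change Submodule.span ℝ (Set.range B.row) = ⊤
    rw [← range_vecMulLinear, LinearMap.range_eq_top]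
    intro v
    refine ⟨Matrix.vecMul v B⁻¹, ?_⟩
    simp [Matrix.vecMulLinear_apply, Matrix.vecMul_vecMul,
      Matrix.nonsing_inv_mul B hdet]
  constructor
  · intro x
    rw [eq_top_iff, ← hspanB]
    apply Submodule.span_le.mpr
    rintro w ⟨i, rfl⟩
    rcases le_or_gt 0 (dotProduct (B i) x) with h | h
    · exact Submodule.subset_span ⟨Sum.inl i, h, rfl⟩
    · have hmem : -(d i • B i) ∈
          {w : Fin n → ℝ | ∃ j, 0 ≤ dotProduct (W j) x ∧ W j = w} := by
        refine ⟨Sum.inr (Sum.inl i), ?_, hWinr i⟩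
        rw [hWinr i]
        have : dotProduct (-(d i • B i)) x
            = -(d i * dotProduct (B i) x) := by
          simp [neg_dotProduct, smul_dotProduct]
        rw [this]
        nlinarith [hd i]
      have h1 : -(d i • B i) ∈ Submodule.span ℝ
          {w : Fin n → ℝ | ∃ j, 0 ≤ dotProduct (W j) x ∧ W j = w} :=
        Submodule.subset_span hmem
      have : B i = ((-(d i)⁻¹ : ℝ)) • (-(d i • B i)) := by
        rw [smul_neg, neg_smul, neg_neg, smul_smul,
          inv_mul_cancel₀ (hd i).ne', one_smul]
      rw [this]
      exact Submodule.smul_mem _ _ h1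
  · intro x y hxy
    have hB' : ∀ i, dotProduct (B i) x = dotProduct (B i) y := by
      intro i
      have e1 := congrFun hxy (Sum.inl i)
      have e2 := congrFun hxy (Sum.inr (Sum.inl i))
      simp only [relu, Matrix.mulVec] at e1 e2
      rw [hWinr i] at e2
      have ed : ∀ z : Fin n → ℝ, dotProduct (fun j => -(d i * B i j)) z
          = -(d i * dotProduct (B i) z) := by
        intro z
        simp [dotProduct, Finset.mul_sum, mul_assoc]
      simp only [Pi.neg_apply, Pi.smul_apply, smul_eq_mul] at e2
      have h2' : max (-(d i * dotProduct (B i) x)) 0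
          = max (-(d i * dotProduct (B i) y)) 0 := by
        rw [← ed, ← ed]; exact e2
      exact relu_aux (hd i) e1 h2'
    have hBv : B.mulVec x = B.mulVec y := funext fun i => hB' i
    have : B⁻¹.mulVec (B.mulVec x) = B⁻¹.mulVec (B.mulVec y) := by rw [hBv]
    simpa [Matrix.mulVec_mulVec, Matrix.nonsing_inv_mul B hdet] using this
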